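/- Fix y₀ ∈ [c,b] and a kernel w(x,z) with 0 ≤ w(x,z) ≤ 𝕎(x-z) for all c ≤ z ≤ x ≤ b, where 𝕎 : ℝ → [0,∞) is increasing with 𝕎(u) = 0 for u < 0. Suppose there exist M₃ ≥ sup_{x∈[c,b]} ω(x) and s₀ > 0 with ∫₀^∞ e^{-s₀ u} 𝕎(u) du ≤ 1/(2M₃). If H : [c,b] → ℝ is bounded measurable and satisfies H(x) = ∫_{y₀}^x w(x,z) ω(z) H(z) dz for all x ∈ [c,b], then H ≡ 0 on [y₀,b]. -/

import Mathlib

open MeasureTheory Set Real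

/-- uniqueness half of the renewal-type equation, Lemma 2.2:
under a Laplace-transform smallness condition on the dominating kernel `𝕎`,
the only bounded measurable solution of `H(x) = ∫_{y₀}^x w(x,z) ω(z) H(z) dz`
on `[c,b]` is `H ≡ 0` on `[y₀,b]`. -/
theorem stmt_1 (c b y₀ : ℝ) (hcb : c ≤ b) (hy₀ : y₀ ∈ Set.Icc c b)
    (ω : ℝ → ℝ) (hωm : Measurable ω) (hωpos : ∀ x, 0 ≤ ω x)
    (hωloc : ∀ r : ℝ, ∃ C : ℝ, ∀ x : ℝ, |x| ≤ r → ω x ≤ C)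
    (WW : ℝ → ℝ) (hWWpos : ∀ u, 0 ≤ WW u) (hWWmono : Monotone WW)
    (hWW0 : ∀ u : ℝ, u < 0 → WW u = 0)
    (w : ℝ → ℝ → ℝ) (hwm : Measurable (Function.uncurry w))
    (hw : ∀ x z : ℝ, c ≤ z → z ≤ x → x ≤ b → 0 ≤ w x z ∧ w x z ≤ WW (x - z))
    (M₃ s₀ : ℝ) (hs₀ : 0 < s₀)
    (hM₃ : ∀ x ∈ Set.Icc c b, ω x ≤ M₃)
    (hlap : ∫ u in Set.Ioi (0:ℝ), Real.exp (-s₀ * u) * WW u ≤ 1 / (2 * M₃))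
    (H : ℝ → ℝ) (hHm : Measurable H)
    (hHb : ∃ C : ℝ, ∀ x ∈ Set.Icc c b, |H x| ≤ C)
    (heq : ∀ x ∈ Set.Icc c b, H x = ∫ z in Set.Ioc y₀ x, w x z * ω z * H z) :
    ∀ x ∈ Set.Icc y₀ b, H x = 0 := by
  obtain ⟨C, hC⟩ := hHb
  have hC0 : 0 ≤ C := le_trans (abs_nonneg _) (hC y₀ hy₀)
  have hM₃0 : 0 ≤ M₃ := le_trans (hωpos y₀) (hM₃ y₀ hy₀)
  set L : ℝ := WW (b - c) * M₃ with hLdef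
  have hL0 : 0 ≤ L := mul_nonneg (hWWpos _) hM₃0
  -- measurability of the integrand
  have hmeas : ∀ x : ℝ, Measurable fun z => w x z * ω z * H z := by
    intro x
    have h1 : Measurable fun z => w x z :=
      hwm.comp (measurable_const.prodMk measurable_id)
    exact (h1.mul hωm).mul hHm
  -- pointwise bound on the integrand
  have hpt : ∀ x ∈ Set.Icc y₀ b, ∀ z ∈ Set.Ioc y₀ x,
      |w x z * ω z * H z| ≤ L * |H z| := by
    intro x hx z hz
    have hcz : c ≤ z := le_of_lt (lt_of_le_of_lt hy₀.1 hz.1)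
    have hzx : z ≤ x := hz.2
    have hxb : x ≤ b := hx.2
    obtain ⟨hw0, hwW⟩ := hw x z hcz hzx hxb
    have hwb : w x z ≤ WW (b - c) :=
      le_trans hwW (hWWmono (by linarith))
    have hωb : ω z ≤ M₃ := hM₃ z ⟨hcz, le_trans hzx hxb⟩
    have : |w x z * ω z * H z| = w x z * ω z * |H z| := by
      rw [abs_mul, abs_mul, abs_of_nonneg hw0, abs_of_nonneg (hωpos z)]
    rw [this, hLdef]
    have h1 : w x z * ω z ≤ WW (b - c) * M₃ :=
      mul_le_mul hwb hωb (hωpos z) (hWWpos _)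
    exact mul_le_mul_of_nonneg_right h1 (abs_nonneg _)
  -- key induction
  have key : ∀ n : ℕ, ∀ x ∈ Set.Icc y₀ b,
      |H x| ≤ C * L ^ n * (x - y₀) ^ n / n.factorial := by
    intro n
    induction n with
    | zero =>
      intro x hx
      simpa using hC x ⟨le_trans hy₀.1 hx.1, hx.2⟩
    | succ n ih =>
      intro x hx
      have hxcb : x ∈ Set.Icc c b := ⟨le_trans hy₀.1 hx.1, hx.2⟩
      have hxy : y₀ ≤ x := hx.1
      -- integrability of the integrand on Ioc y₀ x
      have hint : IntegrableOn (fun z => w x z * ω z * H z) (Set.Ioc y₀ x) := by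
        refine Integrable.mono' (g := fun _ => L * C)
          ((integrableOn_const_iff enorm_ne_top).mpr (Or.inr measure_Ioc_lt_top))
          ((hmeas x).aestronglyMeasurable) ?_
        filter_upwards [ae_restrict_mem measurableSet_Ioc] with z hz
        rw [Real.norm_eq_abs]
        calc |w x z * ω z * H z| ≤ L * |H z| := hpt x hx z hz
          _ ≤ L * C := by
              have hzcb : z ∈ Set.Icc c b :=
                ⟨le_of_lt (lt_of_le_of_lt hy₀.1 hz.1), le_trans hz.2 hx.2⟩
              exact mul_le_mul_of_nonneg_left (hC z hzcb) hL0
      -- bound |H z| for z in Ioc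
      have hHzb : ∀ z ∈ Set.Ioc y₀ x,
          |w x z * ω z * H z| ≤ L * (C * L ^ n * (z - y₀) ^ n / n.factorial) := by
        intro z hz
        have hzIcc : z ∈ Set.Icc y₀ b := ⟨le_of_lt hz.1, le_trans hz.2 hx.2⟩
        calc |w x z * ω z * H z| ≤ L * |H z| := hpt x hx z hz
          _ ≤ L * (C * L ^ n * (z - y₀) ^ n / n.factorial) :=
              mul_le_mul_of_nonneg_left (ih z hzIcc) hL0
      -- the dominating function is integrable (continuous on compact)
      have hgint : IntegrableOn
          (fun z => L * (C * L ^ n * (z - y₀) ^ n / n.factorial)) (Set.Ioc y₀ x) := by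
        apply Continuous.integrableOn_Ioc
        fun_prop
      have habs : |H x| ≤ ∫ z in Set.Ioc y₀ x,
          L * (C * L ^ n * (z - y₀) ^ n / n.factorial) := by
        rw [heq x hxcb]
        calc |∫ z in Set.Ioc y₀ x, w x z * ω z * H z|
            ≤ ∫ z in Set.Ioc y₀ x, |w x z * ω z * H z| := by
              simpa only [Real.norm_eq_abs] using
                norm_integral_le_integral_norm (μ := volume.restrict (Set.Ioc y₀ x))
                  (fun z => w x z * ω z * H z)
          _ ≤ _ := by
              refine setIntegral_mono_on hint.abs hgint measurableSet_Ioc ?_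
              intro z hz; exact hHzb z hz
      -- compute the integral
      have hpow : ∫ z in Set.Ioc y₀ x, (z - y₀) ^ n = (x - y₀) ^ (n + 1) / (n + 1) := by
        rw [← intervalIntegral.integral_of_le hxy,
          intervalIntegral.integral_comp_sub_right (fun u => u ^ n) y₀]
        simp [integral_pow]
      have hcalc : (∫ z in Set.Ioc y₀ x,
          L * (C * L ^ n * (z - y₀) ^ n / n.factorial))
          = C * L ^ (n + 1) * (x - y₀) ^ (n + 1) / (n + 1).factorial := by
        have : (fun z => L * (C * L ^ n * (z - y₀) ^ n / n.factorial))
            = fun z => (L * C * L ^ n / n.factorial) * (z - y₀) ^ n := by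
          funext z; ring
        rw [this, MeasureTheory.integral_const_mul, hpow, Nat.factorial_succ]
        have hfact : (n.factorial : ℝ) ≠ 0 := by positivity
        have hn1 : ((n : ℝ) + 1) ≠ 0 := by positivity
        field_simp
        push_cast
        ring
      calc |H x| ≤ _ := habs
        _ = _ := hcalc
  -- conclude by taking n → ∞
  intro x hx
  have hxy : (0:ℝ) ≤ x - y₀ := by linarith [hx.1]
  have hlim : Filter.Tendsto
      (fun n : ℕ => C * L ^ n * (x - y₀) ^ n / n.factorial) Filter.atTop (nhds 0) := by
    have h := (FloorSemiring.tendsto_pow_div_factorial_atTop (K := ℝ)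
      (L * (x - y₀))).const_mul C
    simp only [mul_zero] at h
    refine h.congr (fun n => ?_)
    rw [mul_pow]; ring
  have hle : |H x| ≤ 0 :=
    ge_of_tendsto' hlim (fun n => key n x hx)
  exact abs_eq_zero.mp (le_antisymm hle (abs_nonneg _))
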